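/- Let k be a positive integer, p_k := log₂ C(2k,k), and define f_k(x) := ∑_{j=0}^{k} C(k,j)² (1−x)^{p_k(k−j)/k} x^{p_k j/k}. Then f_k is twice differentiable on (0,1) and for every x ∈ (0,1) it satisfies the differential equation a_k(x) f_k''(x) + b_k(x) f_k'(x) + p_k c_k(x) f_k(x) = 0, where a_k(x) := (1−x)²x²((1−x)^{p_k/k} − x^{p_k/k})², b_k(x) := (1−x)x((1−x)^{p_k/k} − x^{p_k/k})·((1−x)^{p_k/k}(1+2(p_k−1)x) + x^{p_k/k}(1+2(p_k−1)(1−x))), and c_k(x) := (1−x)^{2p_k/k} x (1+(p_k−1)x) + x^{2p_k/k} (1−x)(1+(p_k−1)(1−x)) − (1−x)^{p_k/k} x^{p_k/k} (p_k − 2(p_k−1)(1−x)x). -/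

import Mathlib

open Finset Real

noncomputable def Fk (k : ℕ) (y : ℝ) : ℝ :=
  ∑ j ∈ Finset.range (k+1), (Nat.choose k j : ℝ)^2 * y^j

noncomputable def Fk1 (k : ℕ) (y : ℝ) : ℝ :=
  ∑ j ∈ Finset.range (k+1), (Nat.choose k j : ℝ)^2 * ((j : ℝ) * y^(j-1))

noncomputable def Fk2 (k : ℕ) (y : ℝ) : ℝ :=
  ∑ j ∈ Finset.range (k+1), (Nat.choose k j : ℝ)^2 * ((j : ℝ) * (((j-1 : ℕ)) : ℝ) * y^(j-1-1))

lemma hasDerivAt_Fk (k : ℕ) (y : ℝ) : HasDerivAt (Fk k) (Fk1 k y) y := by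
  apply HasDerivAt.fun_sum
  intro j _
  simpa [mul_assoc] using (hasDerivAt_pow j y).const_mul ((Nat.choose k j : ℝ)^2)

lemma hasDerivAt_Fk1 (k : ℕ) (y : ℝ) : HasDerivAt (Fk1 k) (Fk2 k y) y := by
  apply HasDerivAt.fun_sum
  intro j _
  have h := (hasDerivAt_pow (j-1) y).const_mul ((Nat.choose k j : ℝ)^2 * (j:ℝ))
  convert (config := {preTransparency := .default}) h using 1
  · funext z; ring
  · ring

lemma Fk_rel (k : ℕ) (y : ℝ) :
    y*(1-y)*Fk2 k y + (1+(2*(k:ℝ)-1)*y)*Fk1 k y = (k:ℝ)^2 * Fk k y := by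
  have step : y*(1-y)*Fk2 k y + (1+(2*(k:ℝ)-1)*y)*Fk1 k y - (k:ℝ)^2 * Fk k y
      = (∑ j ∈ Finset.range (k+1), (Nat.choose k j : ℝ)^2 * ((j:ℝ)^2 * y^(j-1)))
        - (∑ j ∈ Finset.range (k+1), (Nat.choose k j : ℝ)^2 * (((k:ℝ)-j)^2 * y^j)) := by
    unfold Fk Fk1 Fk2
    rw [Finset.mul_sum, Finset.mul_sum, Finset.mul_sum, ← Finset.sum_add_distrib,
      ← Finset.sum_sub_distrib, ← Finset.sum_sub_distrib]
    apply Finset.sum_congr rfl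
    intro j _
    rcases j with _ | _ | n <;> push_cast <;> ring
  have shift : (∑ j ∈ Finset.range (k+1), (Nat.choose k j : ℝ)^2 * ((j:ℝ)^2 * y^(j-1)))
      = ∑ j ∈ Finset.range (k+1), (Nat.choose k j : ℝ)^2 * (((k:ℝ)-j)^2 * y^j) := by
    rw [Finset.sum_range_succ' _ k, Finset.sum_range_succ]
    simp only [Nat.cast_zero, Nat.cast_ofNat, pow_succ]
    norm_num
    apply Finset.sum_congr rfl
    intro i hi
    have hik : i < k := Finset.mem_range.mp hi
    have h := Nat.choose_succ_right_eq k i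
    have hcast : (Nat.choose k (i+1) : ℝ) * ((i:ℝ)+1) = (Nat.choose k i : ℝ) * ((k:ℝ) - i) := by
      have := congrArg (Nat.cast : ℕ → ℝ) h
      push_cast [Nat.cast_sub hik.le] at this
      linarith [this]
    linear_combination ((Nat.choose k (i+1) : ℝ) * ((i:ℝ)+1) + (Nat.choose k i : ℝ) * ((k:ℝ) - i)) * y^i * hcast
  linarith [step, shift]

noncomputable def gk (k : ℕ) (q x : ℝ) : ℝ :=
  (1-x)^(q*(k:ℝ)) * Fk k ((x/(1-x))^q)

noncomputable def gk1 (k : ℕ) (q x : ℝ) : ℝ :=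
  -(q*(k:ℝ)) * (1-x)^(q*(k:ℝ)-1) * Fk k ((x/(1-x))^q)
  + (1-x)^(q*(k:ℝ)) * Fk1 k ((x/(1-x))^q) * (q * (x/(1-x))^(q-1) / (1-x)^2)

noncomputable def gk2 (k : ℕ) (q x : ℝ) : ℝ :=
  (q*(k:ℝ))*(q*(k:ℝ)-1) * (1-x)^(q*(k:ℝ)-2) * Fk k ((x/(1-x))^q)
  - 2*(q*(k:ℝ)) * (1-x)^(q*(k:ℝ)-1) * Fk1 k ((x/(1-x))^q) * (q * (x/(1-x))^(q-1) / (1-x)^2)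
  + (1-x)^(q*(k:ℝ)) * Fk2 k ((x/(1-x))^q) * (q * (x/(1-x))^(q-1) / (1-x)^2)^2
  + (1-x)^(q*(k:ℝ)) * Fk1 k ((x/(1-x))^q) *
      (q*(q-1) * (x/(1-x))^(q-2) / (1-x)^4 + 2*q*(x/(1-x))^(q-1)/(1-x)^3)

section deriv
variable {k : ℕ} {q x : ℝ}

lemma hs_deriv (h1x : (1:ℝ) - x ≠ 0) :
    HasDerivAt (fun y : ℝ => y/(1-y)) (1/(1-x)^2) x := by
  have h := (hasDerivAt_id x).div ((hasDerivAt_id x).const_sub 1) h1x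
  convert (config := {preTransparency := .default}) h using 1
  simp only [id_eq]
  field_simp
  ring

lemma ht_deriv (hx : 0 < x) (h1x : 0 < (1:ℝ) - x) (r : ℝ) :
    HasDerivAt (fun y : ℝ => (y/(1-y))^r) (r * (x/(1-x))^(r-1) * (1/(1-x)^2)) x := by
  have hpos : x/(1-x) ≠ 0 := ne_of_gt (div_pos hx h1x)
  have h := (Real.hasDerivAt_rpow_const (p := r) (Or.inl hpos)).comp x (hs_deriv h1x.ne')
  exact h

lemma hA_deriv (h1x : (1:ℝ) - x ≠ 0) (r : ℝ) :
    HasDerivAt (fun y : ℝ => (1-y)^r) (-(r * (1-x)^(r-1))) x := by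
  have h := (Real.hasDerivAt_rpow_const (p := r) (Or.inl h1x)).comp x
    ((hasDerivAt_id x).const_sub 1)
  rw [show r * (1-x)^(r-1) * -1 = -(r*(1-x)^(r-1)) by ring] at h
  exact h

lemma hasDerivAt_gk (hx : 0 < x) (h1x : x < 1) :
    HasDerivAt (gk k q) (gk1 k q x) x := by
  have h1 : (0:ℝ) < 1 - x := by linarith
  have hW := (hasDerivAt_Fk k ((x/(1-x))^q)).comp x (ht_deriv hx h1 q)
  have h := (hA_deriv h1.ne' (q*(k:ℝ))).mul hW
  convert (config := {preTransparency := .default}) h using 1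
  unfold gk1
  simp only [Function.comp]
  ring

lemma hasDerivAt_gk1 (hx : 0 < x) (h1x : x < 1) :
    HasDerivAt (gk1 k q) (gk2 k q x) x := by
  have h1 : (0:ℝ) < 1 - x := by linarith
  have hW := (hasDerivAt_Fk k ((x/(1-x))^q)).comp x (ht_deriv hx h1 q)
  have hW1 := (hasDerivAt_Fk1 k ((x/(1-x))^q)).comp x (ht_deriv hx h1 q)
  -- first summand
  have hterm1 := ((hA_deriv h1.ne' (q*(k:ℝ)-1)).mul hW).const_mul (-(q*(k:ℝ)))
  -- T = q * s^(q-1) / (1-x)^2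
  have hT := ((ht_deriv hx h1 (q-1)).const_mul q).div
      (((hasDerivAt_id x).const_sub 1).pow 2) (pow_ne_zero 2 h1.ne')
  have hterm2 := ((hA_deriv h1.ne' (q*(k:ℝ))).mul hW1).mul hT
  have h := hterm1.add hterm2
  convert (config := {preTransparency := .default}) h using 1
  · funext y
    unfold gk1
    simp only [Function.comp, id_eq, Pi.mul_apply, Pi.div_apply, Pi.pow_apply, Pi.add_apply]
    ring
  · unfold gk2
    rw [show q*(k:ℝ)-1-1 = q*(k:ℝ)-2 by ring, show q-1-1 = q-2 by ring]
    simp only [Function.comp, id_eq, Pi.mul_apply, Pi.div_apply, Pi.pow_apply, Pi.add_apply]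
    field_simp
    ring
end deriv

lemma key_identity (x q kk A U V W W1 W2 : ℝ) (hx : x ≠ 0) (h1x : 1 - x ≠ 0)
    (hU : U ≠ 0)
    (hrel : V / U * (1 - V / U) * W2 + (1 + (2 * kk - 1) * (V / U)) * W1 = kk ^ 2 * W) :
    (1 - x) ^ 2 * x ^ 2 * (U - V) ^ 2 *
          (q * kk * (q * kk - 1) * (A / (1 - x) ^ 2) * W -
                2 * (q * kk) * (A / (1 - x)) * W1 *
                  (q * (V / U / (x / (1 - x))) / (1 - x) ^ 2) +
              A * W2 *
                (q * (V / U / (x / (1 - x))) / (1 - x) ^ 2) ^ 2 +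
            A * W1 *
              (q * (q - 1) * (V / U / (x / (1 - x)) ^ 2) / (1 - x) ^ 4 +
                2 * q * (V / U / (x / (1 - x))) / (1 - x) ^ 3)) +
        (1 - x) * x * (U - V) *
            (U * (1 + 2 * (q * kk - 1) * x) + V * (1 + 2 * (q * kk - 1) * (1 - x))) *
          (-(q * kk) * (A / (1 - x)) * W +
            A * W1 *
              (q * (V / U / (x / (1 - x))) / (1 - x) ^ 2)) +
      q * kk *
          (U * U * x * (1 + (q * kk - 1) * x) +
              V * V * (1 - x) * (1 + (q * kk - 1) * (1 - x)) -
            U * V * (q * kk - 2 * (q * kk - 1) * (1 - x) * x)) *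
        (A * W)
      = 0 := by
  have key : (1 - x) ^ 2 * x ^ 2 * (U - V) ^ 2 *
          (q * kk * (q * kk - 1) * (A / (1 - x) ^ 2) * W -
                2 * (q * kk) * (A / (1 - x)) * W1 *
                  (q * (V / U / (x / (1 - x))) / (1 - x) ^ 2) +
              A * W2 *
                (q * (V / U / (x / (1 - x))) / (1 - x) ^ 2) ^ 2 +
            A * W1 *
              (q * (q - 1) * (V / U / (x / (1 - x)) ^ 2) / (1 - x) ^ 4 +
                2 * q * (V / U / (x / (1 - x))) / (1 - x) ^ 3)) +
        (1 - x) * x * (U - V) *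
            (U * (1 + 2 * (q * kk - 1) * x) + V * (1 + 2 * (q * kk - 1) * (1 - x))) *
          (-(q * kk) * (A / (1 - x)) * W +
            A * W1 *
              (q * (V / U / (x / (1 - x))) / (1 - x) ^ 2)) +
      q * kk *
          (U * U * x * (1 + (q * kk - 1) * x) +
              V * V * (1 - x) * (1 + (q * kk - 1) * (1 - x)) -
            U * V * (q * kk - 2 * (q * kk - 1) * (1 - x) * x)) *
        (A * W)
      = q ^ 2 * V * (U - V) * A *
        (V / U * (1 - V / U) * W2 + (1 + (2 * kk - 1) * (V / U)) * W1 - kk ^ 2 * W) := by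
    field_simp
    ring
  rw [key, hrel, sub_self, mul_zero]

theorem fk_differential_equation (k : ℕ) (hk : 0 < k)
    (pk : ℝ) (hpk : pk = Real.logb 2 (Nat.choose (2 * k) k))
    (f : ℝ → ℝ)
    (hf : ∀ x : ℝ, f x = ∑ j ∈ Finset.range (k + 1),
        (Nat.choose k j : ℝ) ^ 2 *
          (1 - x) ^ (pk * ((k : ℝ) - j) / k) * x ^ (pk * (j : ℝ) / k)) :
    ∀ x ∈ Set.Ioo (0 : ℝ) 1,
      DifferentiableAt ℝ f x ∧ DifferentiableAt ℝ (deriv f) x ∧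
      ((1 - x) ^ 2 * x ^ 2 * ((1 - x) ^ (pk / k) - x ^ (pk / k)) ^ 2) *
          deriv (deriv f) x +
        ((1 - x) * x * ((1 - x) ^ (pk / k) - x ^ (pk / k)) *
          ((1 - x) ^ (pk / k) * (1 + 2 * (pk - 1) * x) +
            x ^ (pk / k) * (1 + 2 * (pk - 1) * (1 - x)))) * deriv f x +
        pk * ((1 - x) ^ (2 * pk / k) * x * (1 + (pk - 1) * x) +
          x ^ (2 * pk / k) * (1 - x) * (1 + (pk - 1) * (1 - x)) -
          (1 - x) ^ (pk / k) * x ^ (pk / k) * (pk - 2 * (pk - 1) * (1 - x) * x)) * f x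
        = 0 := by
  have hk0 : (k:ℝ) ≠ 0 := Nat.cast_ne_zero.mpr hk.ne'
  intro x hx
  obtain ⟨hx0, hx1⟩ := hx
  have h1x : (0:ℝ) < 1 - x := by linarith
  set q : ℝ := pk / (k:ℝ) with hqdef
  have hfg : ∀ y ∈ Set.Ioo (0:ℝ) 1, f y = gk k q y := by
    intro y hy
    obtain ⟨hy0, hy1⟩ := hy
    have h1y : (0:ℝ) < 1 - y := by linarith
    rw [hf y]
    unfold gk Fk
    rw [Finset.mul_sum]
    apply Finset.sum_congr rfl
    intro j _
    have e1 : ((y/(1-y))^q)^j = (y/(1-y))^(q*(j:ℝ)) := by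
      rw [Real.rpow_mul (le_of_lt (div_pos hy0 h1y)), Real.rpow_natCast]
    have e2 : pk * ((k:ℝ) - (j:ℝ))/(k:ℝ) = q*(k:ℝ) - q*(j:ℝ) := by
      rw [hqdef]; field_simp
    have e3 : pk * (j:ℝ)/(k:ℝ) = q*(j:ℝ) := by rw [hqdef]; ring
    rw [e1, e2, e3, Real.div_rpow hy0.le h1y.le, Real.rpow_sub h1y]
    have hne : (1-y)^(q*(j:ℝ)) ≠ 0 := (Real.rpow_pos_of_pos h1y _).ne'
    field_simp
  have hev : f =ᶠ[nhds x] gk k q :=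
    Filter.eventuallyEq_of_mem (isOpen_Ioo.mem_nhds ⟨hx0, hx1⟩) hfg
  have h1 : HasDerivAt f (gk1 k q x) x := (hasDerivAt_gk hx0 hx1).congr_of_eventuallyEq hev
  have hderiv : ∀ y ∈ Set.Ioo (0:ℝ) 1, deriv f y = gk1 k q y := by
    intro y hy
    exact ((hasDerivAt_gk hy.1 hy.2).congr_of_eventuallyEq
      (Filter.eventuallyEq_of_mem (isOpen_Ioo.mem_nhds hy) hfg)).deriv
  have hev2 : deriv f =ᶠ[nhds x] gk1 k q :=
    Filter.eventuallyEq_of_mem (isOpen_Ioo.mem_nhds ⟨hx0, hx1⟩) hderiv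
  have h2 : HasDerivAt (deriv f) (gk2 k q x) x :=
    (hasDerivAt_gk1 hx0 hx1).congr_of_eventuallyEq hev2
  refine ⟨h1.differentiableAt, h2.differentiableAt, ?_⟩
  rw [h2.deriv, h1.deriv, hfg x ⟨hx0, hx1⟩]
  unfold gk gk1 gk2
  have hsx : (0:ℝ) < x/(1-x) := div_pos hx0 h1x
  have c2 : ((2:ℕ):ℝ) = (2:ℝ) := by norm_num
  have p2a : (1-x)^((2:ℝ)) = (1-x)^(2:ℕ) := by rw [← c2, Real.rpow_natCast]
  have p2b : (x/(1-x))^((2:ℝ)) = (x/(1-x))^(2:ℕ) := by rw [← c2, Real.rpow_natCast]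
  rw [Real.rpow_sub h1x (q*(k:ℝ)) 1, Real.rpow_one,
      Real.rpow_sub h1x (q*(k:ℝ)) 2, p2a,
      Real.rpow_sub hsx q 1, Real.rpow_one,
      Real.rpow_sub hsx q 2, p2b,
      Real.div_rpow hx0.le h1x.le q,
      show 2*pk/(k:ℝ) = q + q by rw [hqdef]; field_simp; ring,
      Real.rpow_add h1x q q, Real.rpow_add hx0 q q,
      show pk = q*(k:ℝ) by rw [hqdef]; field_simp]
  exact key_identity x q (k:ℝ) ((1-x)^(q*(k:ℝ))) ((1-x)^q) (x^q)
    (Fk k (x^q/(1-x)^q)) (Fk1 k (x^q/(1-x)^q)) (Fk2 k (x^q/(1-x)^q))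
    hx0.ne' h1x.ne' (Real.rpow_pos_of_pos h1x q).ne' (Fk_rel k (x^q/(1-x)^q))
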